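/- Let a < b < c be reals and κ > 0. Define θ_A = κ(c-b), θ_B = κ(a-c), θ_C = κ(b-a), and ω = κ(b-a)(c-b)(c-a)/(a² + b² + c² - ab - bc - ca). Then 1/ω = 1/θ_A + 1/θ_B + 1/θ_C. -/
import Mathlib


theorem da_brocard_cotangent (a b c κ : ℝ) (hab : a < b) (hbc : b < c)
    (hκ : 0 < κ) :
    1 / (κ*(b - a)*(c - b)*(c - a) / (a^2 + b^2 + c^2 - a*b - b*c - c*a))
      = 1 / (κ*(c - b)) + 1 / (κ*(a - c)) + 1 / (κ*(b - a)) := by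
  have h1 : b - a ≠ 0 := by linarith
  have h2 : c - b ≠ 0 := by linarith
  have h3 : c - a ≠ 0 := by linarith
  have h4 : a - c ≠ 0 := by linarith
  have hk : κ ≠ 0 := ne_of_gt hκ
  field_simp
  ring
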